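/- Let (X,p,E) be an LNVL and e ∈ X₊ a p-unit. Then a net (x_α) is up-convergent to 0 if and only if p(|x_α| ∧ e) →o 0 in E. -/

import Mathlib

/-- Order convergence of a net `x : A → E` to `l` in a lattice-ordered group:
there is a decreasing net `y` (over some directed index) with infimum `0`
such that for each index `b`, eventually `|x a - l| ≤ y b`. -/
def OConv {A E : Type*} [Preorder A] [Lattice E] [AddCommGroup E]
    (x : A → E) (l : E) : Prop :=
  ∃ (K : Type) (s : K → K → Prop) (y : K → E),
    Nonempty K ∧
    (∀ b c : K, ∃ d : K, s b d ∧ s c d) ∧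
    (∀ b c : K, s b c → y c ≤ y b) ∧
    IsGLB (Set.range y) 0 ∧
    (∀ b : K, ∃ a₀ : A, ∀ a : A, a₀ ≤ a → |x a - l| ≤ y b)

/-- `p`-convergence of a net in a lattice-normed vector lattice. -/
def PConv {A X E : Type*} [Preorder A] [Lattice X] [AddCommGroup X]
    [Lattice E] [AddCommGroup E] (p : X → E) (x : A → X) (l : X) : Prop :=
  OConv (fun a => p (x a - l)) 0

variable {X E : Type*}
  [Lattice X] [AddCommGroup X] [Module ℝ X] [CovariantClass X X (· + ·) (· ≤ ·)]
  [Lattice E] [AddCommGroup E] [Module ℝ E] [CovariantClass E E (· + ·) (· ≤ ·)]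

/-- In a lattice-ordered group, `a ⊓ (b + c) ≤ a ⊓ b + a ⊓ c` for nonnegative elements. -/
lemma inf_add_le_aux {G : Type*} [Lattice G] [AddCommGroup G]
    [CovariantClass G G (· + ·) (· ≤ ·)] {a b c : G} (ha : 0 ≤ a) (hb : 0 ≤ b) (hc : 0 ≤ c) :
    a ⊓ (b + c) ≤ a ⊓ b + a ⊓ c := by
  have h1 : a ⊓ (b + c) - a ⊓ b ≤ a := by
    have : a ⊓ (b + c) ≤ a + a ⊓ b := by
      calc a ⊓ (b + c) ≤ a := inf_le_left
      _ ≤ a + a ⊓ b := le_add_of_nonneg_right (le_inf ha hb)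
    exact sub_le_iff_le_add.2 this
  have h2 : a ⊓ (b + c) - a ⊓ b ≤ c := by
    have : a ⊓ (b + c) ≤ c + a ⊓ b := by
      rw [add_inf]
      exact le_inf (inf_le_left.trans (le_add_of_nonneg_left hc))
        (by rw [add_comm c b]; exact inf_le_right)
    exact sub_le_iff_le_add.2 this
  have h3 := sub_le_iff_le_add.1 (le_inf h1 h2)
  rwa [add_comm (a ⊓ c) (a ⊓ b)] at h3

/-- `v ⊓ (n • e) ≤ n • (v ⊓ e)` for nonnegative `v`, `e`. -/
lemma inf_nsmul_le {G : Type*} [Lattice G] [AddCommGroup G]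
    [CovariantClass G G (· + ·) (· ≤ ·)] {v e : G} (hv : 0 ≤ v) (he : 0 ≤ e) :
    ∀ n : ℕ, v ⊓ (n • e) ≤ n • (v ⊓ e) := by
  intro n
  induction n with
  | zero => simp
  | succ n ih =>
    have h1 : v ⊓ ((n + 1) • e) = v ⊓ (n • e + e) := by rw [succ_nsmul]
    have h2 : v ⊓ (n • e + e) ≤ v ⊓ (n • e) + v ⊓ e :=
      inf_add_le_aux hv (nsmul_nonneg he n) he
    calc v ⊓ ((n + 1) • e) ≤ v ⊓ (n • e) + v ⊓ e := by rw [h1]; exact h2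
    _ ≤ n • (v ⊓ e) + v ⊓ e := add_le_add ih le_rfl
    _ = (n + 1) • (v ⊓ e) := (succ_nsmul _ _).symm

/-- `v ⊓ u ≤ v ⊓ z + (u - u ⊓ z)`. -/
lemma inf_le_inf_add_sub {G : Type*} [Lattice G] [AddCommGroup G]
    [CovariantClass G G (· + ·) (· ≤ ·)] (v u z : G) :
    v ⊓ u ≤ v ⊓ z + (u - u ⊓ z) := by
  have h : v ⊓ u + u ⊓ z ≤ v ⊓ z + u := by
    have h0 : v ⊓ u + u ⊓ z ≤ (v + u) ⊓ (z + u) :=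
      le_inf (add_le_add inf_le_left inf_le_left)
        ((add_le_add inf_le_right inf_le_right).trans (add_comm u z).le)
    rwa [← inf_add] at h0
  have h2 : v ⊓ u ≤ (v ⊓ z + u) - u ⊓ z := le_sub_iff_add_le.2 h
  rwa [add_sub_assoc] at h2

/-- If a decreasing directed net has infimum `0`, then anything below all `n • y b` is `≤ 0`. -/
lemma le_zero_of_le_nsmul {K : Type} {s : K → K → Prop} {y : K → E}
    (hne : Nonempty K) (hdir : ∀ b c : K, ∃ d : K, s b d ∧ s c d)
    (hmono : ∀ b c : K, s b c → y c ≤ y b) (hglb : IsGLB (Set.range y) 0) :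
    ∀ (n : ℕ) (t : E), (∀ b : K, t ≤ n • y b) → t ≤ 0 := by
  intro n
  induction n with
  | zero =>
    intro t ht
    obtain ⟨b⟩ := hne
    simpa using ht b
  | succ n ih =>
    intro t ht
    have key : ∀ c : K, t - y c ≤ 0 := by
      intro c
      apply ih
      intro b
      obtain ⟨d, hbd, hcd⟩ := hdir b c
      have h1 : t ≤ (n + 1) • y d := ht d
      have h2 : (n + 1) • y d = n • y d + y d := succ_nsmul _ _
      have h3 : n • y d + y d ≤ n • y b + y c :=
        add_le_add (nsmul_le_nsmul_right (hmono b d hbd) n) (hmono c d hcd)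
      have : t ≤ n • y b + y c := h1.trans (h2.le.trans h3)
      exact sub_le_iff_le_add.2 this
    have : t ∈ lowerBounds (Set.range y) := by
      rintro _ ⟨c, rfl⟩
      exact sub_nonpos.1 (key c)
    exact hglb.2 this

theorem up_convergence_at_p_unit {A : Type*} [Preorder A] [Nonempty A] [IsDirected A (· ≤ ·)]
    (p : X → E)
    (hp_nonneg : ∀ x : X, 0 ≤ p x)
    (hp_eq_zero : ∀ x : X, p x = 0 ↔ x = 0)
    (hp_smul : ∀ (r : ℝ) (x : X), p (r • x) = |r| • p x)
    (hp_add : ∀ x y : X, p (x + y) ≤ p x + p y)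
    (hp_mono : ∀ x y : X, |x| ≤ |y| → p x ≤ p y)
    (e : X) (he_pos : 0 ≤ e)
    (he : ∀ x : X, 0 ≤ x → OConv (fun n : ℕ => p (x - x ⊓ n • e)) 0)
    (x : A → X) :
    (∀ u : X, 0 ≤ u → OConv (fun a => p (|x a| ⊓ u)) (0 : E)) ↔
      OConv (fun a => p (|x a| ⊓ e)) (0 : E) := by
  constructor
  · intro h; exact h e he_pos
  · intro h u hu
    classical
    obtain ⟨K, sK, y, hKne, hKdir, hKmono, hKglb, hKev⟩ := h
    obtain ⟨L, sL, w, hLne, hLdir, hLmono, hLglb, hLev⟩ := he u hu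
    have hy_nonneg : ∀ b, 0 ≤ y b := fun b => hKglb.1 ⟨b, rfl⟩
    have hw_nonneg : ∀ c, 0 ≤ w c := fun c => hLglb.1 ⟨c, rfl⟩
    -- for each c pick n with p (u - u ⊓ n • e) ≤ w c
    have hN : ∀ c : L, ∃ n : ℕ, p (u - u ⊓ n • e) ≤ w c := by
      intro c
      obtain ⟨n₀, hn₀⟩ := hLev c
      refine ⟨n₀, ?_⟩
      have := hn₀ n₀ le_rfl
      rwa [sub_zero, abs_of_nonneg (hp_nonneg _)] at this
    choose N hNle using hN
    -- the dominating family
    set f : K × L → E := fun q => N q.2 • y q.1 + w q.2 with hf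
    obtain ⟨b₀⟩ := hKne
    obtain ⟨c₀⟩ := hLne
    set q₀ : K × L := (b₀, c₀) with hq₀
    -- key pointwise bound
    have key : ∀ (a : A) (b : K) (c : L), p (|x a| ⊓ e) ≤ y b →
        p (|x a| ⊓ u) ≤ f (b, c) := by
      intro a b c hybound
      set v : X := |x a| with hv
      have hv_nonneg : 0 ≤ v := abs_nonneg _
      have step1 : v ⊓ u ≤ N c • (v ⊓ e) + (u - u ⊓ N c • e) := by
        have h1 := inf_le_inf_add_sub v u (N c • e)
        have h2 : v ⊓ (N c • e) ≤ N c • (v ⊓ e) := inf_nsmul_le hv_nonneg he_pos (N c)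
        exact h1.trans (add_le_add h2 le_rfl)
      have hlhs_nonneg : 0 ≤ v ⊓ u := le_inf hv_nonneg hu
      have hrhs_nonneg : 0 ≤ N c • (v ⊓ e) + (u - u ⊓ N c • e) :=
        add_nonneg (nsmul_nonneg (le_inf hv_nonneg he_pos) _)
          (sub_nonneg.2 inf_le_left)
      have hm : p (v ⊓ u) ≤ p (N c • (v ⊓ e) + (u - u ⊓ N c • e)) := by
        apply hp_mono
        rw [abs_of_nonneg hlhs_nonneg, abs_of_nonneg hrhs_nonneg]
        exact step1
      have hsmul : p (N c • (v ⊓ e)) = N c • p (v ⊓ e) := by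
        rw [← Nat.cast_smul_eq_nsmul ℝ (N c) (v ⊓ e), hp_smul,
          abs_of_nonneg (Nat.cast_nonneg _), Nat.cast_smul_eq_nsmul]
      calc p (v ⊓ u) ≤ p (N c • (v ⊓ e)) + p (u - u ⊓ N c • e) :=
            hm.trans (hp_add _ _)
        _ = N c • p (v ⊓ e) + p (u - u ⊓ N c • e) := by rw [hsmul]
        _ ≤ N c • y b + w c := add_le_add (nsmul_le_nsmul_right hybound _) (hNle c)
    -- build the new net over finite subsets
    refine ⟨Finset (K × L), (· ⊆ ·),
      fun S => (insert q₀ S).inf' (Finset.insert_nonempty _ _) f, ⟨∅⟩,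
      fun S T => ⟨S ∪ T, Finset.subset_union_left, Finset.subset_union_right⟩,
      ?_, ?_, ?_⟩
    · intro S T hST
      exact Finset.inf'_mono f (Finset.insert_subset_insert q₀ hST) _
    · constructor
      · rintro _ ⟨S, rfl⟩
        apply Finset.le_inf'
        rintro ⟨b, c⟩ _
        exact add_nonneg (nsmul_nonneg (hy_nonneg b) _) (hw_nonneg c)
      · intro t ht
        have htf : ∀ (b : K) (c : L), t ≤ N c • y b + w c := by
          intro b c
          have h1 : t ≤ (insert q₀ ({(b, c)} : Finset (K × L))).inf'
              (Finset.insert_nonempty _ _) f :=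
            ht ⟨({(b, c)} : Finset (K × L)), rfl⟩
          exact h1.trans (Finset.inf'_le f (Finset.mem_insert_of_mem (Finset.mem_singleton_self _)))
        have hwc : ∀ c : L, t ≤ w c := by
          intro c
          have hb : ∀ b : K, t - w c ≤ N c • y b := fun b =>
            sub_le_iff_le_add.2 (htf b c)
          exact sub_nonpos.1
            (le_zero_of_le_nsmul ⟨b₀⟩ hKdir hKmono hKglb (N c) (t - w c) hb)
        have : t ∈ lowerBounds (Set.range w) := by rintro _ ⟨c, rfl⟩; exact hwc c
        exact hLglb.2 this
    · intro S
      set T := insert q₀ S with hT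
      -- for each q in T get an index threshold
      have hth : ∀ q : K × L, ∃ a₀ : A, ∀ a : A, a₀ ≤ a → p (|x a| ⊓ e) ≤ y q.1 := by
        intro q
        obtain ⟨a₀, ha₀⟩ := hKev q.1
        refine ⟨a₀, fun a ha => ?_⟩
        have := ha₀ a ha
        rwa [sub_zero, abs_of_nonneg (hp_nonneg _)] at this
      choose g hg using hth
      obtain ⟨a₀, ha₀⟩ := (T.image g).exists_le
      refine ⟨a₀, fun a ha => ?_⟩
      rw [sub_zero, abs_of_nonneg (hp_nonneg _)]
      apply Finset.le_inf'
      rintro ⟨b, c⟩ hq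
      have hga : g (b, c) ≤ a :=
        (ha₀ (g (b, c)) (Finset.mem_image_of_mem g hq)).trans ha
      exact key a b c (hg (b, c) a hga)
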